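/- arXiv:1504.03987 — 3 statements merged into one kernel-verified Lean document; each statement's English description precedes it below -/
import Mathlib

section
/- Let Y be a symmetric n×n real matrix and x ∈ {±1}^n. If there exists a diagonal matrix D such that Tr(D) = x^T Y x, D − Y is positive semidefinite, and the second smallest eigenvalue of D − Y is strictly positive, then X = x x^T is the unique optimal solution of the semidefinite program: maximize Tr(YX) subject to X_ii = 1 for all i and X ⪰ 0. -/
open Matrix

/-- The `k`-th smallest eigenvalue of a Hermitian matrix (sorted in increasing order). -/
noncomputable def eigSorted {n : ℕ} {M : Matrix (Fin n) (Fin n) ℝ}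
    (hM : M.IsHermitian) : Fin n → ℝ :=
  hM.eigenvalues ∘ Tuple.sort hM.eigenvalues

section Helpers

variable {n : ℕ}

/-- trace of `Eᴴ * E` is nonnegative -/
lemma tr_conj_self_nonneg (E : Matrix (Fin n) (Fin n) ℝ) : 0 ≤ (Eᴴ * E).trace := by
  rw [Matrix.trace]
  refine Finset.sum_nonneg fun j _ => ?_
  simp only [Matrix.diag_apply, Matrix.mul_apply, Matrix.conjTranspose_apply, star_trivial]
  exact Finset.sum_nonneg fun i _ => mul_self_nonneg _

lemma tr_conj_self_eq_zero {E : Matrix (Fin n) (Fin n) ℝ} (h : (Eᴴ * E).trace = 0) :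
    E = 0 := by
  rw [Matrix.trace] at h
  have hterm : ∀ j ∈ Finset.univ, (0:ℝ) ≤ (Eᴴ * E).diag j := fun j _ => by
    simp only [Matrix.diag_apply, Matrix.mul_apply, Matrix.conjTranspose_apply, star_trivial]
    exact Finset.sum_nonneg fun i _ => mul_self_nonneg _
  have hz := (Finset.sum_eq_zero_iff_of_nonneg hterm).mp h
  ext i j
  have := hz j (Finset.mem_univ j)
  simp only [Matrix.diag_apply, Matrix.mul_apply, Matrix.conjTranspose_apply, star_trivial] at this
  have hz2 := (Finset.sum_eq_zero_iff_of_nonneg (fun i _ => mul_self_nonneg (E i j))).mp this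
  have := hz2 i (Finset.mem_univ i)
  simpa [mul_self_eq_zero] using this

/-- `Tr(MX) ≥ 0` for psd `M`, `X`, with equality implying `M * X = 0`. -/
lemma psd_trace_mul {M X : Matrix (Fin n) (Fin n) ℝ} (hM : M.PosSemidef)
    (hX : X.PosSemidef) : 0 ≤ (M * X).trace ∧ ((M * X).trace = 0 → M * X = 0) := by
  obtain ⟨B, rfl⟩ : ∃ B : Matrix (Fin n) (Fin n) ℝ, M = Bᴴ * B := by
    open scoped MatrixOrder in
    exact CStarAlgebra.nonneg_iff_eq_star_mul_self.mp hM.nonneg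
  obtain ⟨C, rfl⟩ : ∃ C : Matrix (Fin n) (Fin n) ℝ, X = Cᴴ * C := by
    open scoped MatrixOrder in
    exact CStarAlgebra.nonneg_iff_eq_star_mul_self.mp hX.nonneg
  have hre : Bᴴ * B * (Cᴴ * C) = Bᴴ * (B * Cᴴ) * C := by
    simp only [Matrix.mul_assoc]
  have htr : (Bᴴ * B * (Cᴴ * C)).trace = ((B * Cᴴ)ᴴ * (B * Cᴴ)).trace := by
    rw [Matrix.conjTranspose_mul, Matrix.conjTranspose_conjTranspose,
      show Bᴴ * B * (Cᴴ * C) = (Bᴴ * B * Cᴴ) * C by simp [Matrix.mul_assoc],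
      Matrix.trace_mul_comm,
      show C * (Bᴴ * B * Cᴴ) = C * Bᴴ * (B * Cᴴ) by simp [Matrix.mul_assoc]]
  constructor
  · rw [htr]; exact tr_conj_self_nonneg _
  · intro h0
    rw [htr] at h0
    have : B * Cᴴ = 0 := tr_conj_self_eq_zero h0
    rw [hre, this, Matrix.mul_zero, Matrix.zero_mul]

/-- Kernel of psd matrix with positive second eigenvalue is one-dimensional. -/
lemma ker_span {M : Matrix (Fin n) (Fin n) ℝ} (hn : 2 ≤ n) (hpsd : M.PosSemidef)
    (hgap : 0 < eigSorted hpsd.isHermitian ⟨1, lt_of_lt_of_le one_lt_two hn⟩)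
    {x : Fin n → ℝ} (hMx : M *ᵥ x = 0) (hxne : x ≠ 0)
    {v : Fin n → ℝ} (hv : M *ᵥ v = 0) : ∃ c : ℝ, v = c • x := by
  have hM := hpsd.isHermitian
  set U : Matrix (Fin n) (Fin n) ℝ := (hM.eigenvectorUnitary : Matrix (Fin n) (Fin n) ℝ) with hU
  have hUU : star U * U = 1 := Matrix.mem_unitaryGroup_iff'.mp hM.eigenvectorUnitary.2
  have hUU' : U * star U = 1 := Matrix.mem_unitaryGroup_iff.mp hM.eigenvectorUnitary.2
  set σ := Tuple.sort hM.eigenvalues with hσ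
  set k₀ : Fin n := σ ⟨0, by omega⟩ with hk₀
  -- positivity of other eigenvalues
  have hpos : ∀ k : Fin n, k ≠ k₀ → 0 < hM.eigenvalues k := by
    intro k hk
    have hkj : k = σ (σ.symm k) := (Equiv.apply_symm_apply σ k).symm
    have hjne : σ.symm k ≠ ⟨0, by omega⟩ := by
      intro h
      apply hk
      rw [hkj, h, hk₀]
    have hle : (⟨1, by omega⟩ : Fin n) ≤ σ.symm k := by
      have : (0:ℕ) < (σ.symm k : ℕ) := by
        rcases Nat.eq_zero_or_pos (σ.symm k : ℕ) with h | h
        · exact absurd (Fin.ext h) hjne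
        · exact h
      exact Fin.mk_le_of_le_val this
    have := Tuple.monotone_sort hM.eigenvalues hle
    have h2 : eigSorted hM ⟨1, by omega⟩ ≤ hM.eigenvalues k := by
      rw [hkj]; exact this
    exact lt_of_lt_of_le hgap h2
  -- kernel vectors are multiples of column k₀ of U
  have key : ∀ w : Fin n → ℝ, M *ᵥ w = 0 →
      w = (star U *ᵥ w) k₀ • (U *ᵥ (Pi.single k₀ 1 : Fin n → ℝ)) := by
    intro w hw
    have hspec := hM.spectral_theorem
    have hcomm : Matrix.diagonal (RCLike.ofReal ∘ hM.eigenvalues) * star U = star U * M := by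
      conv_rhs => rw [hspec]
      rw [Unitary.conjStarAlgAut_apply, ← hU, ← Matrix.mul_assoc, ← Matrix.mul_assoc, hUU, Matrix.one_mul]
    have h1 : Matrix.diagonal (RCLike.ofReal ∘ hM.eigenvalues) *ᵥ (star U *ᵥ w) = 0 := by
      rw [Matrix.mulVec_mulVec, hcomm, ← Matrix.mulVec_mulVec, hw, Matrix.mulVec_zero]
    set s := star U *ᵥ w with hs
    have hcoord : ∀ k : Fin n, k ≠ k₀ → s k = 0 := by
      intro k hk
      have := congrFun h1 k
      simp only [Matrix.mulVec_diagonal, Pi.zero_apply, Function.comp_apply,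
        RCLike.ofReal_real_eq_id, id_eq] at this
      have hne : hM.eigenvalues k ≠ 0 := ne_of_gt (hpos k hk)
      exact (mul_eq_zero.mp this).resolve_left hne
    have hsing : s = s k₀ • (Pi.single k₀ 1 : Fin n → ℝ) := by
      funext k
      by_cases h : k = k₀
      · subst h; simp
      · simp [Pi.single_apply, h, hcoord k h]
    calc w = (U * star U) *ᵥ w := by rw [hUU', Matrix.one_mulVec]
    _ = U *ᵥ s := by rw [← Matrix.mulVec_mulVec, hs]
    _ = U *ᵥ (s k₀ • (Pi.single k₀ 1 : Fin n → ℝ)) := by rw [← hsing]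
    _ = s k₀ • (U *ᵥ (Pi.single k₀ 1 : Fin n → ℝ)) := by rw [Matrix.mulVec_smul]
  obtain hv' := key v hv
  obtain hx' := key x hMx
  set a := (star U *ᵥ v) k₀
  set b := (star U *ᵥ x) k₀
  have hbne : b ≠ 0 := by
    intro hb
    apply hxne
    rw [hx', hb, zero_smul]
  refine ⟨a / b, ?_⟩
  rw [hv', hx', smul_smul, div_mul_cancel₀ a hbne]

end Helpers

/-- Dual certificate lemma: if there is a diagonal matrix `D` with `Tr D = xᵀYx`,
`D - Y ⪰ 0` and `λ₂(D - Y) > 0`, then `X = xxᵀ` is the unique optimal solution of the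
SDP `max Tr(YX) s.t. X_{ii} = 1, X ⪰ 0`. -/
theorem stmt0 {n : ℕ} (hn : 2 ≤ n) (Y D : Matrix (Fin n) (Fin n) ℝ)
    (hY : Y.IsHermitian) (x : Fin n → ℝ) (hx : ∀ i, x i = 1 ∨ x i = -1)
    (hD : D.IsDiag) (htr : D.trace = x ⬝ᵥ Y.mulVec x)
    (hpsd : (D - Y).PosSemidef)
    (hgap : 0 < eigSorted hpsd.isHermitian ⟨1, by omega⟩) :
    (∀ X : Matrix (Fin n) (Fin n) ℝ, (∀ i, X i i = 1) → X.PosSemidef →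
      (Y * X).trace ≤ (Y * vecMulVec x x).trace) ∧
    (∀ X : Matrix (Fin n) (Fin n) ℝ, (∀ i, X i i = 1) → X.PosSemidef →
      (Y * X).trace = (Y * vecMulVec x x).trace → X = vecMulVec x x) := by
  have hx2 : ∀ i, x i * x i = 1 := by
    intro i; rcases hx i with h | h <;> rw [h] <;> ring
  -- x ≠ 0
  have hxne : x ≠ 0 := by
    intro h
    have := hx2 ⟨0, by omega⟩
    rw [h] at this
    simpa using this
  -- x ⬝ᵥ D x = tr D
  have hDx : x ⬝ᵥ D *ᵥ x = D.trace := by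
    rw [Matrix.trace]
    simp only [dotProduct, Matrix.mulVec, dotProduct]
    refine Finset.sum_congr rfl fun i _ => ?_
    rw [Finset.sum_eq_single i]
    · rw [Matrix.diag_apply]
      calc x i * (D i i * x i) = D i i * (x i * x i) := by ring
      _ = D i i := by rw [hx2 i, mul_one]
    · intro j _ hj
      rw [hD (Ne.symm hj), zero_mul]
    · intro h; exact absurd (Finset.mem_univ i) h
  -- (D - Y) x = 0
  have hMx : (D - Y) *ᵥ x = 0 := by
    have h0 : x ⬝ᵥ (D - Y) *ᵥ x = 0 := by
      rw [Matrix.sub_mulVec, dotProduct_sub, hDx, htr, sub_self]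
    have := (hpsd.dotProduct_mulVec_zero_iff x).mp (by simpa using h0)
    exact this
  -- trace(D * X) = trace D for feasible X
  have trDX : ∀ X : Matrix (Fin n) (Fin n) ℝ, (∀ i, X i i = 1) → (D * X).trace = D.trace := by
    intro X hXd
    rw [Matrix.trace, Matrix.trace]
    refine Finset.sum_congr rfl fun i _ => ?_
    rw [Matrix.diag_apply, Matrix.mul_apply, Finset.sum_eq_single i]
    · rw [hXd i, mul_one, Matrix.diag_apply]
    · intro j _ hj; rw [hD (Ne.symm hj), zero_mul]
    · intro h; exact absurd (Finset.mem_univ i) h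
  -- trace(Y * xxᵀ) = trace D
  have trYxx : (Y * vecMulVec x x).trace = D.trace := by
    rw [htr, Matrix.trace]
    simp only [Matrix.diag_apply, Matrix.mul_apply, Matrix.vecMulVec_apply,
      dotProduct, Matrix.mulVec, dotProduct, Finset.mul_sum]
    refine Finset.sum_congr rfl fun i _ => Finset.sum_congr rfl fun j _ => by ring
  -- decomposition of trace(Y X)
  have decomp : ∀ X : Matrix (Fin n) (Fin n) ℝ, (∀ i, X i i = 1) →
      (Y * X).trace = D.trace - ((D - Y) * X).trace := by
    intro X hXd
    rw [Matrix.sub_mul, Matrix.trace_sub, trDX X hXd]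
    ring
  constructor
  · intro X hXd hXpsd
    rw [trYxx, decomp X hXd]
    have := (psd_trace_mul hpsd hXpsd).1
    linarith
  · intro X hXd hXpsd heq
    rw [trYxx, decomp X hXd] at heq
    have htr0 : ((D - Y) * X).trace = 0 := by linarith
    have hMX : (D - Y) * X = 0 := (psd_trace_mul hpsd hXpsd).2 htr0
    -- columns of X are in the kernel
    have hcol : ∀ j : Fin n, ∃ c : ℝ, (fun i => X i j) = c • x := by
      intro j
      refine ker_span hn hpsd hgap hMx hxne ?_
      funext i
      have := congrFun (congrFun hMX i) j
      simpa [Matrix.mul_apply, Matrix.mulVec, dotProduct] using this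
    ext i j
    obtain ⟨c, hc⟩ := hcol j
    have hXij : X i j = c * x i := congrFun hc i
    have hXjj : X j j = c * x j := congrFun hc j
    have hc' : c = x j := by
      have h1 : c * x j = 1 := by rw [← hXjj, hXd j]
      calc c = c * (x j * x j) := by rw [hx2 j, mul_one]
      _ = (c * x j) * x j := by ring
      _ = x j := by rw [h1, one_mul]
    rw [Matrix.vecMulVec_apply, hXij, hc']
    ring
end

section
/- Let X be an n×n symmetric random matrix with centered entries, and let σ² = max_i Σ_j E[X_ij²]. Suppose every row satisfies Σ_j E[X_ij²] = σ² (equal row variances), and let w_ij = E[X_ij²]. Then there exist disjoint subsets 𝓘, 𝓙 ⊆ [n] with |𝓘| ≥ n/8 such that for every i ∈ 𝓘, Σ_{j∈𝓙} E[X_ij²] ≥ σ²/8. -/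
open Finset

lemma count_aux {n : ℕ} {i j : Fin n} (hij : i ≠ j) :
    ((Finset.univ : Finset (Fin n)).powerset.filter (fun S => i ∈ S ∧ j ∉ S)).card
      = 2 ^ (n - 2) := by
  have h : ((Finset.univ : Finset (Fin n)).powerset.filter (fun S => i ∈ S ∧ j ∉ S)).card
      = (((Finset.univ : Finset (Fin n)).erase i).erase j).powerset.card := by
    apply Finset.card_nbij' (fun S => S.erase i) (fun T => insert i T)
    · intro S hS
      simp only [mem_coe, mem_filter, mem_powerset] at hS
      simp only [mem_coe, mem_powerset]
      intro x hx
      simp only [mem_erase]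
      rcases hS with ⟨-, hi, hj⟩
      simp only [mem_erase] at hx
      refine ⟨fun h => hj (h ▸ hx.2), hx.1, mem_univ x⟩
    · intro T hT
      simp only [mem_coe, mem_powerset] at hT
      simp only [mem_coe, mem_filter, mem_powerset, subset_univ, true_and]
      refine ⟨mem_insert_self i T, ?_⟩
      intro hjmem
      rcases Finset.mem_insert.1 hjmem with h | h
      · exact hij h.symm
      · have := hT h
        simp only [mem_erase] at this
        exact this.1 rfl
    · intro S hS
      simp only [mem_coe, mem_filter, mem_powerset] at hS
      exact Finset.insert_erase hS.2.1
    · intro T hT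
      simp only [mem_coe, mem_powerset] at hT
      refine Finset.erase_insert ?_
      intro hiT
      have := hT hiT
      simp only [mem_erase] at this
      exact this.2.1 rfl
  rw [h, Finset.card_powerset]
  congr 1
  have hj' : j ∈ (Finset.univ : Finset (Fin n)).erase i := by simp [hij.symm]
  rw [Finset.card_erase_of_mem hj', Finset.card_erase_of_mem (mem_univ i), Finset.card_univ,
    Fintype.card_fin]
  omega

open MeasureTheory

/-- For a symmetric random matrix with centered entries, zero diagonal and equal row
variances `σ²`, there are disjoint sets `𝓘, 𝓙 ⊆ [n]` with `|𝓘| ≥ n/8` such that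
`∑_{j∈𝓙} E[X_{ij}²] ≥ σ²/8` for every `i ∈ 𝓘`. -/
theorem stmt10 {Ω : Type*} [MeasurableSpace Ω] (P : Measure Ω) [IsProbabilityMeasure P]
    {n : ℕ} (X : Fin n → Fin n → Ω → ℝ) (σ : ℝ)
    (hsym : ∀ i j, X i j = X j i) (hdiag : ∀ i ω, X i i ω = 0)
    (hcent : ∀ i j, ∫ ω, X i j ω ∂P = 0)
    (hrow : ∀ i, ∑ j, ∫ ω, (X i j ω) ^ 2 ∂P = σ ^ 2) :
    ∃ I J : Finset (Fin n), Disjoint I J ∧ (n : ℝ) / 8 ≤ I.card ∧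
      ∀ i ∈ I, σ ^ 2 / 8 ≤ ∑ j ∈ J, ∫ ω, (X i j ω) ^ 2 ∂P := by
  set w : Fin n → Fin n → ℝ := fun i j => ∫ ω, (X i j ω) ^ 2 ∂P with hw
  have hw0 : ∀ i j, 0 ≤ w i j := fun i j => integral_nonneg (fun ω => sq_nonneg _)
  have hwd : ∀ i, w i i = 0 := by intro i; simp [hw, hdiag]
  have hrow' : ∀ i, ∑ j, w i j = σ ^ 2 := hrow
  -- trivial case σ² = 0
  rcases (sq_nonneg σ).eq_or_lt with hσ | hσ
  · refine ⟨Finset.univ, ∅, disjoint_bot_right, ?_, ?_⟩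
    · rw [Finset.card_univ, Fintype.card_fin]
      have : (0:ℝ) ≤ n := Nat.cast_nonneg n
      linarith
    · intro i _
      simp [← hσ]
  -- trivial case n = 0
  rcases Nat.eq_zero_or_pos n with hn0 | hn0
  · refine ⟨∅, ∅, disjoint_bot_right, by simp [hn0], by simp⟩
  -- now n ≥ 2
  have hn2 : 2 ≤ n := by
    by_contra h
    have hn1 : n = 1 := by omega
    subst hn1
    have h1 := hrow' 0
    rw [Fin.sum_univ_one, hwd 0] at h1
    rw [← h1] at hσ
    exact lt_irrefl _ hσ
  set cut : Finset (Fin n) → ℝ := fun S => ∑ i ∈ S, ∑ j ∈ Sᶜ, w i j with hcut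
  -- key averaging identity
  have key : ∑ S ∈ (Finset.univ : Finset (Fin n)).powerset, cut S
      = 2 ^ (n - 2) * ((n : ℝ) * σ ^ 2) := by
    have step1 : ∀ S : Finset (Fin n), cut S
        = ∑ i, ∑ j, (if i ∈ S ∧ j ∉ S then w i j else 0) := by
      intro S
      have : ∀ i : Fin n, (∑ j, (if i ∈ S ∧ j ∉ S then w i j else 0))
          = if i ∈ S then ∑ j ∈ Sᶜ, w i j else 0 := by
        intro i
        by_cases hi : i ∈ S
        · rw [if_pos hi]
          rw [← Fintype.sum_ite_mem Sᶜ (w i)]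
          exact Finset.sum_congr rfl fun j _ => by simp [hi, Finset.mem_compl]
        · simp [hi]
      rw [hcut]
      simp only [this]
      rw [Fintype.sum_ite_mem S]
    calc ∑ S ∈ (Finset.univ : Finset (Fin n)).powerset, cut S
        = ∑ S ∈ (Finset.univ : Finset (Fin n)).powerset, ∑ i, ∑ j,
            (if i ∈ S ∧ j ∉ S then w i j else 0) :=
          Finset.sum_congr rfl fun S _ => step1 S
      _ = ∑ i, ∑ j, ∑ S ∈ (Finset.univ : Finset (Fin n)).powerset,
            (if i ∈ S ∧ j ∉ S then w i j else 0) := by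
          rw [Finset.sum_comm]
          exact Finset.sum_congr rfl fun i _ => Finset.sum_comm
      _ = ∑ i, ∑ j, (2:ℝ) ^ (n - 2) * w i j := by
          refine Finset.sum_congr rfl fun i _ => Finset.sum_congr rfl fun j _ => ?_
          rw [← Finset.sum_filter, Finset.sum_const, nsmul_eq_mul]
          by_cases hij : i = j
          · subst hij; rw [hwd i, mul_zero, mul_zero]
          · rw [count_aux hij]; push_cast; ring
      _ = 2 ^ (n - 2) * ((n : ℝ) * σ ^ 2) := by
          simp only [← Finset.mul_sum, hrow']
          rw [Finset.sum_const, Finset.card_univ, Fintype.card_fin, nsmul_eq_mul]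
  -- extract a good S
  have havg : ∃ S ∈ (Finset.univ : Finset (Fin n)).powerset,
      (n : ℝ) * σ ^ 2 / 4 ≤ cut S := by
    apply Finset.exists_le_of_sum_le ⟨∅, Finset.empty_mem_powerset _⟩
    rw [key, Finset.sum_const, Finset.card_powerset, Finset.card_univ, Fintype.card_fin,
      nsmul_eq_mul]
    have h2 : ((2:ℝ)) ^ n = 2 ^ (n - 2) * 4 := by
      have : n = (n - 2) + 2 := by omega
      rw [this, pow_add]; norm_num
    push_cast
    rw [h2]
    ring_nf
    linarith [le_refl ((2:ℝ) ^ (n-2) * ((n:ℝ) * σ ^ 2))]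
  obtain ⟨S, -, hS⟩ := havg
  classical
  refine ⟨S.filter (fun i => σ ^ 2 / 8 ≤ ∑ j ∈ Sᶜ, w i j), Sᶜ,
    Disjoint.mono_left (Finset.filter_subset _ _) disjoint_compl_right, ?_,
    fun i hi => (Finset.mem_filter.mp hi).2⟩
  set I := S.filter (fun i => σ ^ 2 / 8 ≤ ∑ j ∈ Sᶜ, w i j) with hI
  have hr_le : ∀ i ∈ S, ∑ j ∈ Sᶜ, w i j ≤ σ ^ 2 := by
    intro i _
    rw [← hrow' i]
    exact Finset.sum_le_sum_of_subset_of_nonneg (Finset.subset_univ _)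
      (fun j _ _ => hw0 i j)
  have hsplit : cut S = ∑ i ∈ I, (∑ j ∈ Sᶜ, w i j)
      + ∑ i ∈ S.filter (fun i => ¬ σ ^ 2 / 8 ≤ ∑ j ∈ Sᶜ, w i j), (∑ j ∈ Sᶜ, w i j) :=
    (Finset.sum_filter_add_sum_filter_not S _ _).symm
  have b1 : ∑ i ∈ I, (∑ j ∈ Sᶜ, w i j) ≤ (I.card : ℝ) * σ ^ 2 := by
    rw [← nsmul_eq_mul]
    exact Finset.sum_le_card_nsmul I _ _ (fun i hi => hr_le i (Finset.filter_subset _ _ hi))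
  have b2 : ∑ i ∈ S.filter (fun i => ¬ σ ^ 2 / 8 ≤ ∑ j ∈ Sᶜ, w i j), (∑ j ∈ Sᶜ, w i j)
      ≤ (n : ℝ) * (σ ^ 2 / 8) := by
    calc ∑ i ∈ S.filter (fun i => ¬ σ ^ 2 / 8 ≤ ∑ j ∈ Sᶜ, w i j), (∑ j ∈ Sᶜ, w i j)
        ≤ ((S.filter (fun i => ¬ σ ^ 2 / 8 ≤ ∑ j ∈ Sᶜ, w i j)).card : ℝ) * (σ ^ 2 / 8) := by
          rw [← nsmul_eq_mul]
          refine Finset.sum_le_card_nsmul _ _ _ (fun i hi => ?_)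
          exact le_of_lt (lt_of_not_ge (Finset.mem_filter.mp hi).2)
      _ ≤ (n : ℝ) * (σ ^ 2 / 8) := by
          apply mul_le_mul_of_nonneg_right _ (by positivity)
          have h : (S.filter (fun i => ¬ σ ^ 2 / 8 ≤ ∑ j ∈ Sᶜ, w i j)).card ≤ n := by
            simpa using Finset.card_le_univ (S.filter (fun i => ¬ σ ^ 2 / 8 ≤ ∑ j ∈ Sᶜ, w i j))
          exact_mod_cast h
  have hfinal : (n : ℝ) * σ ^ 2 / 4 ≤ (I.card : ℝ) * σ ^ 2 + (n : ℝ) * (σ ^ 2 / 8) := by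
    calc (n : ℝ) * σ ^ 2 / 4 ≤ cut S := hS
      _ ≤ _ := by rw [hsplit]; exact add_le_add b1 b2
  have : (n : ℝ) / 8 * σ ^ 2 ≤ (I.card : ℝ) * σ ^ 2 := by nlinarith
  exact le_of_mul_le_mul_right (by linarith [this]) hσ
end

section
/- Let S ~ Binomial(m, p) and 0 < t < 1. Then P[S < t·mp] ≤ (e^{−(1−t)} / t^t)^{mp} = exp(−mp·(1 − t + t log t)). -/
open Finset in
lemma chernoff_real (m : ℕ) (p t : ℝ) (hp0 : 0 ≤ p) (hp1 : p ≤ 1)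
    (ht0 : 0 < t) (ht1 : t < 1) :
    ∑ k ∈ range (m+1), (if (k:ℝ) < t*(m*p) then p^k*(1-p)^(m-k)*(m.choose k) else 0)
      ≤ Real.exp (-(m*p)*(1-t+t*Real.log t)) := by
  set a : ℝ := t*(m*p) with ha
  have hmp : 0 ≤ (m:ℝ)*p := by positivity
  have ha0 : 0 ≤ a := by positivity
  have step1 : ∑ k ∈ range (m+1), (if (k:ℝ) < a then p^k*(1-p)^(m-k)*(m.choose k) else 0)
      ≤ ∑ k ∈ range (m+1), p^k*(1-p)^(m-k)*(m.choose k) * t ^ ((k:ℝ) - a) := by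
    apply Finset.sum_le_sum
    intro k _
    split_ifs with h
    · have h1 : (1:ℝ) ≤ t ^ ((k:ℝ) - a) :=
        Real.one_le_rpow_of_pos_of_le_one_of_nonpos ht0 ht1.le (by linarith)
      nlinarith [pow_nonneg hp0 k, pow_nonneg (by linarith : (0:ℝ) ≤ 1-p) (m-k),
        mul_nonneg (mul_nonneg (pow_nonneg hp0 k) (pow_nonneg (by linarith : (0:ℝ) ≤ 1-p) (m-k))) (Nat.cast_nonneg (m.choose k))]
    · have h2 : (0:ℝ) ≤ 1-p := by linarith
      positivity
  have step2 : ∑ k ∈ range (m+1), p^k*(1-p)^(m-k)*(m.choose k) * t ^ ((k:ℝ) - a)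
      = t ^ (-a) * (p*t + (1-p))^m := by
    rw [add_pow, Finset.mul_sum]
    apply Finset.sum_congr rfl
    intro k _
    rw [Real.rpow_sub ht0, Real.rpow_natCast, Real.rpow_neg ht0.le, div_eq_mul_inv, mul_pow]
    ring
  have step3 : (p*t + (1-p))^m ≤ Real.exp (-((m:ℝ)*p)*(1-t)) := by
    have hb : p*t + (1-p) ≤ Real.exp (-(p*(1-t))) := by
      have := Real.add_one_le_exp (-(p*(1-t)))
      linarith
    have hb0 : 0 ≤ p*t + (1-p) := by nlinarith
    calc (p*t + (1-p))^m ≤ (Real.exp (-(p*(1-t))))^m := pow_le_pow_left₀ hb0 hb m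
      _ = Real.exp (-((m:ℝ)*p)*(1-t)) := by
          rw [← Real.exp_nat_mul]; ring_nf
  have step4 : t ^ (-a) = Real.exp (-a * Real.log t) := by
    rw [Real.rpow_def_of_pos ht0]; ring_nf
  calc _ ≤ t ^ (-a) * (p*t + (1-p))^m := step1.trans_eq step2
    _ ≤ Real.exp (-a * Real.log t) * Real.exp (-((m:ℝ)*p)*(1-t)) := by
        rw [step4]
        exact mul_le_mul_of_nonneg_left step3 (Real.exp_pos _).le
    _ = Real.exp (-((m:ℝ)*p)*(1-t+t*Real.log t)) := by
        rw [← Real.exp_add]; congr 1; rw [ha]; ring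

/-- Multiplicative Chernoff lower-tail bound for a binomial random variable:
if `S ~ Binomial(m, p)` and `0 < t < 1`, then
`P[S < t·mp] ≤ (e^{−(1−t)}/tᵗ)^{mp} = exp(−mp(1 − t + t log t))`. -/
theorem stmt15 (m : ℕ) (p t : ℝ) (hp0 : 0 ≤ p) (hp1 : ENNReal.ofReal p ≤ 1)
    (ht0 : 0 < t) (ht1 : t < 1) :
    (PMF.binomial (Real.toNNReal p) (ENNReal.coe_le_one_iff.mp hp1) m).toMeasure
        {k | ((k : ℕ) : ℝ) < t * (m * p)}
      ≤ ENNReal.ofReal (Real.exp (-(m * p) * (1 - t + t * Real.log t))) := by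
  have hp1' : p ≤ 1 := ENNReal.ofReal_le_one.mp hp1
  have h1p : (0:ℝ) ≤ 1 - p := by linarith
  rw [PMF.toMeasure_apply _ (by trivial), tsum_fintype]
  have key : ∀ k : Fin (m+1),
      Set.indicator {k : Fin (m+1) | ((k:ℕ):ℝ) < t*(m*p)} (PMF.binomial (Real.toNNReal p) (ENNReal.coe_le_one_iff.mp hp1) m) k
      = ENNReal.ofReal (if ((k:ℕ):ℝ) < t*(m*p) then p^(k:ℕ)*(1-p)^(m-(k:ℕ))*(m.choose k) else 0) := by
    intro k
    rw [Set.indicator_apply]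
    simp only [Set.mem_setOf_eq]
    split_ifs with h
    · rw [PMF.binomial_apply, Fin.val_last]
      rw [show ((Real.toNNReal p : NNReal) : ENNReal) = ENNReal.ofReal p from rfl]
      rw [ENNReal.ofReal_mul (by positivity), ENNReal.ofReal_mul (by positivity),
        ENNReal.ofReal_pow hp0, ENNReal.ofReal_pow h1p, ENNReal.ofReal_natCast]
      congr 2
      rw [← ENNReal.ofReal_one, ← ENNReal.ofReal_sub 1 hp0]
    · simp
  calc ∑ k : Fin (m+1), Set.indicator {k : Fin (m+1) | ((k:ℕ):ℝ) < t*(m*p)} (PMF.binomial (Real.toNNReal p) (ENNReal.coe_le_one_iff.mp hp1) m) k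
      = ∑ k : Fin (m+1), ENNReal.ofReal (if ((k:ℕ):ℝ) < t*(m*p) then p^(k:ℕ)*(1-p)^(m-(k:ℕ))*(m.choose k) else 0) := by
        exact Finset.sum_congr rfl fun k _ => key k
    _ = ENNReal.ofReal (∑ k : Fin (m+1), if ((k:ℕ):ℝ) < t*(m*p) then p^(k:ℕ)*(1-p)^(m-(k:ℕ))*(m.choose k) else 0) := by
        rw [ENNReal.ofReal_sum_of_nonneg]
        intro k _
        split_ifs with h
        · positivity
        · exact le_refl 0
    _ = ENNReal.ofReal (∑ k ∈ Finset.range (m+1), if (k:ℝ) < t*(m*p) then p^k*(1-p)^(m-k)*(m.choose k) else 0) := by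
        congr 1
        exact Fin.sum_univ_eq_sum_range
          (fun k => if (k:ℝ) < t*(m*p) then p^k*(1-p)^(m-k)*(m.choose k) else 0) (m+1)
    _ ≤ _ := ENNReal.ofReal_le_ofReal (chernoff_real m p t hp0 hp1' ht0 ht1)
end
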